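/- Clifford dynamics preserve zero local-operator entanglement of Pauli operators: if C is a Clifford unitary on (Fin N → Fin 2) and a₀ : Fin N → Fin 4 any Pauli label, then for every bipartition N = N_A + N_B, Re tr(ρ_A(Cᴴ * P_{a₀} * C)²) = 1. -/

import Mathlib

open Matrix Kronecker
open scoped Classical

noncomputable section

/-- Single-qubit Pauli matrices. -/
def pauli : Fin 4 → Matrix (Fin 2) (Fin 2) ℂ :=
  ![1, !![0, 1; 1, 0], !![0, -Complex.I; Complex.I, 0], !![1, 0; 0, -1]]

/-- Pauli string on `N` qubits with label `a`. -/
def PauliString {N : ℕ} (a : Fin N → Fin 4) :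
    Matrix (Fin N → Fin 2) (Fin N → Fin 2) ℂ :=
  fun f g => ∏ k, pauli (a k) (f k) (g k)

/-- Reduced Choi state: partial trace over the doubled-B factor of the
normalized Choi state of `O`. -/
def rhoA {ιA ιB : Type*} [Fintype ιA] [Fintype ιB]
    (O : Matrix (ιA × ιB) (ιA × ιB) ℂ) :
    Matrix (ιA × ιA) (ιA × ιA) ℂ :=
  fun p q =>
    (1 / (Fintype.card ιA * Fintype.card ιB : ℂ)) *
      ∑ b : ιB, ∑ b' : ιB, O (p.1, b) (p.2, b') * star (O (q.1, b) (q.2, b'))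

/-- Identification of `N = N_A + N_B` qubits with the pair of subsystems. -/
def qubitEquiv (NA NB : ℕ) :
    (Fin (NA + NB) → Fin 2) ≃ (Fin NA → Fin 2) × (Fin NB → Fin 2) :=
  (Equiv.arrowCongr finSumFinEquiv.symm (Equiv.refl (Fin 2))).trans
    (Equiv.sumArrowEquivProdArrow _ _ _)

/-- Reduced Choi state of an `N = N_A + N_B` qubit operator, subsystem A
being the first `N_A` qubits. -/
def rhoAq (NA NB : ℕ)
    (O : Matrix (Fin (NA + NB) → Fin 2) (Fin (NA + NB) → Fin 2) ℂ) :
    Matrix ((Fin NA → Fin 2) × (Fin NA → Fin 2))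
      ((Fin NA → Fin 2) × (Fin NA → Fin 2)) ℂ :=
  rhoA (Matrix.reindex (qubitEquiv NA NB) (qubitEquiv NA NB) O)

/-- `n`-fold replica (tensor power) of a matrix. -/
def replica {ι : Type*} (n : ℕ) (O : Matrix ι ι ℂ) :
    Matrix (Fin n → ι) (Fin n → ι) ℂ :=
  fun f g => ∏ a, O (f a) (g a)

/-- Replica permutation operator. -/
def Tperm {ι : Type*} [DecidableEq ι] {n : ℕ} (π : Equiv.Perm (Fin n)) :
    Matrix (Fin n → ι) (Fin n → ι) ℂ :=
  fun f g => if f = g ∘ π then 1 else 0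

/-- Number of cycles of a permutation, counting fixed points as 1-cycles. -/
def numCycles {n : ℕ} (π : Equiv.Perm (Fin n)) : ℕ :=
  Multiset.card π.cycleType + (Finset.univ.filter fun x => π x = x).card

/-- `δ(π) = 0` if `π` has no fixed points and all cycles of even length,
else `δ(π) = 1`. -/
def deltaOdd {n : ℕ} (π : Equiv.Perm (Fin n)) : ℕ :=
  if (∀ x, π x ≠ x) ∧ (∀ c ∈ π.cycleType, Even c) then 0 else 1

/-- Projector onto four-fold replicated Pauli strings. -/
def LambdaPlus (N : ℕ) :
    Matrix (Fin 4 → (Fin N → Fin 2)) (Fin 4 → (Fin N → Fin 2)) ℂ :=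
  (1 / (4 ^ N : ℂ)) • ∑ a : Fin N → Fin 4, replica 4 (PauliString a)

def permA : Equiv.Perm (Fin 4) := Equiv.swap 0 1 * Equiv.swap 2 3
def permB : Equiv.Perm (Fin 4) := Equiv.swap 0 3 * Equiv.swap 1 2

/-- The purity contraction permutation operator `T'` on four replicas of a
bipartite system. -/
def Tprime {ιA ιB : Type*} [DecidableEq ιA] [DecidableEq ιB] :
    Matrix (Fin 4 → ιA × ιB) (Fin 4 → ιA × ιB) ℂ :=
  fun f g =>
    if (∀ a, (f a).1 = (g (permA a)).1 ∧ (f a).2 = (g (permB a)).2) then 1 else 0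

/-- The unitary stabilizer group of `U` (as a finite set of pairs of Pauli
labels). -/
def Stab {N : ℕ} (U : Matrix (Fin N → Fin 2) (Fin N → Fin 2) ℂ) :
    Finset ((Fin N → Fin 4) × (Fin N → Fin 4)) :=
  Finset.univ.filter fun p =>
    Matrix.trace (PauliString p.1 * Uᴴ * PauliString p.2 * U) / (2 ^ N : ℂ)
      ∈ ({1, -1} : Set ℂ)


lemma pauli_row_sum (s : Fin 4) (x : Fin 2) :
    ∑ y, pauli s x y * star (pauli s x y) = 1 := by
  fin_cases s <;> fin_cases x <;>
    simp [pauli, Fin.sum_univ_two, Matrix.one_apply]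

lemma pauliString_row_sum {N : ℕ} (a : Fin N → Fin 4) (f : Fin N → Fin 2) :
    ∑ g, PauliString a f g * star (PauliString a f g) = 1 := by
  have h : ∀ g : Fin N → Fin 2, PauliString a f g * star (PauliString a f g)
      = ∏ k, pauli (a k) (f k) (g k) * star (pauli (a k) (f k) (g k)) := by
    intro g
    rw [PauliString, star_prod, Finset.prod_mul_distrib]
  simp_rw [h]
  rw [← Fintype.piFinset_univ,
    ← Finset.prod_univ_sum (fun _ => (Finset.univ : Finset (Fin 2)))
      (fun k y => pauli (a k) (f k) y * star (pauli (a k) (f k) y))]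
  exact Finset.prod_eq_one fun k _ => pauli_row_sum (a k) (f k)

lemma pauliString_total {N : ℕ} (a : Fin N → Fin 4) :
    ∑ f, ∑ g, PauliString a f g * star (PauliString a f g) = (2 ^ N : ℂ) := by
  simp_rw [pauliString_row_sum]
  simp [Finset.card_univ]

lemma qubitEquiv_symm_apply (NA NB : ℕ) (fA : Fin NA → Fin 2) (fB : Fin NB → Fin 2)
    (s : Fin NA ⊕ Fin NB) :
    (qubitEquiv NA NB).symm (fA, fB) (finSumFinEquiv s) = Sum.elim fA fB s := by
  cases s <;>
    simp [qubitEquiv, Equiv.sumArrowEquivProdArrow, Equiv.arrowCongr]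

lemma qubitEquiv_symm_castAdd (NA NB : ℕ) (fA : Fin NA → Fin 2) (fB : Fin NB → Fin 2)
    (i : Fin NA) : (qubitEquiv NA NB).symm (fA, fB) (Fin.castAdd NB i) = fA i := by
  simpa using qubitEquiv_symm_apply NA NB fA fB (Sum.inl i)

lemma qubitEquiv_symm_natAdd (NA NB : ℕ) (fA : Fin NA → Fin 2) (fB : Fin NB → Fin 2)
    (j : Fin NB) : (qubitEquiv NA NB).symm (fA, fB) (Fin.natAdd NA j) = fB j := by
  simpa using qubitEquiv_symm_apply NA NB fA fB (Sum.inr j)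

lemma reindex_pauli (NA NB : ℕ) (a : Fin (NA + NB) → Fin 4)
    (fA gA : Fin NA → Fin 2) (fB gB : Fin NB → Fin 2) :
    (Matrix.reindex (qubitEquiv NA NB) (qubitEquiv NA NB) (PauliString a))
      (fA, fB) (gA, gB)
    = PauliString (fun i => a (finSumFinEquiv (Sum.inl i))) fA gA *
      PauliString (fun j => a (finSumFinEquiv (Sum.inr j))) fB gB := by
  simp only [Matrix.reindex_apply, Matrix.submatrix_apply, PauliString]
  rw [← finSumFinEquiv.prod_comp
    (fun k => pauli (a k) ((qubitEquiv NA NB).symm (fA, fB) k)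
      ((qubitEquiv NA NB).symm (gA, gB) k)), Fintype.prod_sum_type]
  simp [qubitEquiv_symm_castAdd, qubitEquiv_symm_natAdd]

lemma rhoAq_pauli (NA NB : ℕ) (a : Fin (NA + NB) → Fin 4)
    (p q : (Fin NA → Fin 2) × (Fin NA → Fin 2)) :
    rhoAq NA NB (PauliString a) p q
    = (1 / (2 ^ NA : ℂ)) *
      (PauliString (fun i => a (finSumFinEquiv (Sum.inl i))) p.1 p.2 *
        star (PauliString (fun i => a (finSumFinEquiv (Sum.inl i))) q.1 q.2)) := by
  obtain ⟨i, i'⟩ := p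
  obtain ⟨j, j'⟩ := q
  set PA := PauliString (fun i => a (finSumFinEquiv (Sum.inl i))) with hPA
  set PB := PauliString (fun j => a (finSumFinEquiv (Sum.inr j))) with hPB
  have key : ∀ b b' : Fin NB → Fin 2,
      (Matrix.reindex (qubitEquiv NA NB) (qubitEquiv NA NB) (PauliString a)) (i, b) (i', b') *
      star ((Matrix.reindex (qubitEquiv NA NB) (qubitEquiv NA NB) (PauliString a)) (j, b) (j', b'))
      = (PA i i' * star (PA j j')) * (PB b b' * star (PB b b')) := by
    intro b b'
    rw [reindex_pauli, reindex_pauli, ← hPA, ← hPB, star_mul']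
    ring
  show (1 / ((Fintype.card (Fin NA → Fin 2) : ℂ) * (Fintype.card (Fin NB → Fin 2) : ℂ))) *
      ∑ b : Fin NB → Fin 2, ∑ b' : Fin NB → Fin 2, _ = _
  simp_rw [key, ← Finset.mul_sum]
  rw [pauliString_total]
  have hcA : (Fintype.card (Fin NA → Fin 2) : ℂ) = (2 ^ NA : ℂ) := by
    simp [Fintype.card_fun]
  have hcB : (Fintype.card (Fin NB → Fin 2) : ℂ) = (2 ^ NB : ℂ) := by
    simp [Fintype.card_fun]
  rw [hcA, hcB]
  have h2B : (2 ^ NB : ℂ) ≠ 0 := pow_ne_zero _ two_ne_zero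
  field_simp

lemma rhoAq_smul (NA NB : ℕ) (c : ℂ) (hc : c * star c = 1)
    (O : Matrix (Fin (NA + NB) → Fin 2) (Fin (NA + NB) → Fin 2) ℂ) :
    rhoAq NA NB (c • O) = rhoAq NA NB O := by
  ext p q
  unfold rhoAq rhoA
  simp only [Matrix.reindex_apply, Matrix.submatrix_apply, Matrix.smul_apply,
    smul_eq_mul, star_mul']
  congr 1
  refine Finset.sum_congr rfl fun b _ => Finset.sum_congr rfl fun b' _ => ?_
  linear_combination (O ((qubitEquiv NA NB).symm (p.1, b)) ((qubitEquiv NA NB).symm (p.2, b')) *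
    star (O ((qubitEquiv NA NB).symm (q.1, b)) ((qubitEquiv NA NB).symm (q.2, b')))) * hc

lemma trace_rhoAq_pauli_sq (NA NB : ℕ) (a : Fin (NA + NB) → Fin 4) :
    Matrix.trace (rhoAq NA NB (PauliString a) * rhoAq NA NB (PauliString a)) = 1 := by
  set PA := PauliString (fun i => a (finSumFinEquiv (Sum.inl i))) with hPA
  have key : ∀ p q : (Fin NA → Fin 2) × (Fin NA → Fin 2),
      rhoAq NA NB (PauliString a) p q * rhoAq NA NB (PauliString a) q p
      = ((1 / (2 ^ NA : ℂ))^2 * (PA p.1 p.2 * star (PA p.1 p.2))) *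
        (PA q.1 q.2 * star (PA q.1 q.2)) := by
    intro p q
    rw [rhoAq_pauli, rhoAq_pauli, ← hPA]
    ring
  have hsum : ∑ p : (Fin NA → Fin 2) × (Fin NA → Fin 2),
      PA p.1 p.2 * star (PA p.1 p.2) = (2 ^ NA : ℂ) := by
    rw [Fintype.sum_prod_type]
    exact pauliString_total _
  have expand : Matrix.trace (rhoAq NA NB (PauliString a) * rhoAq NA NB (PauliString a))
      = ∑ p : (Fin NA → Fin 2) × (Fin NA → Fin 2),
          ∑ q : (Fin NA → Fin 2) × (Fin NA → Fin 2),
            rhoAq NA NB (PauliString a) p q * rhoAq NA NB (PauliString a) q p := by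
    simp [Matrix.trace, Matrix.diag, Matrix.mul_apply]
  rw [expand]
  simp_rw [key, ← Finset.mul_sum]
  rw [← Finset.sum_mul, ← Finset.mul_sum, hsum]
  have h2A : (2 ^ NA : ℂ) ≠ 0 := pow_ne_zero _ two_ne_zero
  field_simp

/-- Clifford dynamics preserve zero local-operator entanglement
of Pauli operators. -/
theorem clifford_preserves_loe_pure (NA NB : ℕ)
    (C : Matrix (Fin (NA + NB) → Fin 2) (Fin (NA + NB) → Fin 2) ℂ)
    (hC : C ∈ Matrix.unitaryGroup (Fin (NA + NB) → Fin 2) ℂ)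
    (hCliff : ∀ a : Fin (NA + NB) → Fin 4, ∃ b : Fin (NA + NB) → Fin 4,
      ∃ c ∈ ({1, -1, Complex.I, -Complex.I} : Set ℂ),
        Cᴴ * PauliString a * C = c • PauliString b)
    (a₀ : Fin (NA + NB) → Fin 4) :
    (Matrix.trace (rhoAq NA NB (Cᴴ * PauliString a₀ * C) *
        rhoAq NA NB (Cᴴ * PauliString a₀ * C))).re = 1 := by
  obtain ⟨b, c, hc, heq⟩ := hCliff a₀
  have hcc : c * star c = 1 := by
    simp only [Set.mem_insert_iff, Set.mem_singleton_iff] at hc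
    rcases hc with rfl | rfl | rfl | rfl <;>
      simp [Complex.star_def, Complex.conj_I, Complex.I_mul_I] <;> ring_nf <;>
        simp [Complex.I_sq]
  rw [heq, rhoAq_smul NA NB c hcc, trace_rhoAq_pauli_sq]
  simp

end
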